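/- With h² = (b₁−b₂)² + b₁²b₂², λ = (√(4+h²)+√h²)/2, one has λ² − b₁² − 1 ≥ 0 and λ² − b₂² − 1 ≥ 0 for all real b₁, b₂. -/
import Mathlib

lemma stmt8_aux (H b : ℝ) (hH0 : 0 ≤ H) (hkey : b ^ 4 ≤ H * (1 + b ^ 2)) :
    0 ≤ ((Real.sqrt (4 + H) + Real.sqrt H) / 2) ^ 2 - b ^ 2 - 1 := by
  have h4H : (0:ℝ) ≤ 4 + H := by linarith
  have hsq1 : Real.sqrt (4 + H) ^ 2 = 4 + H := Real.sq_sqrt h4H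
  have hsq2 : Real.sqrt H ^ 2 = H := Real.sq_sqrt hH0
  have hcross : 2 * b ^ 2 - H ≤ Real.sqrt (4 + H) * Real.sqrt H := by
    rcases le_or_gt (2 * b ^ 2 - H) 0 with h | h
    · exact h.trans (mul_nonneg (Real.sqrt_nonneg _) (Real.sqrt_nonneg _))
    · have hs : (2 * b ^ 2 - H) ^ 2 ≤ (4 + H) * H := by nlinarith
      calc 2 * b ^ 2 - H = Real.sqrt ((2 * b ^ 2 - H) ^ 2) :=
            (Real.sqrt_sq h.le).symm
        _ ≤ Real.sqrt ((4 + H) * H) := Real.sqrt_le_sqrt hs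
        _ = Real.sqrt (4 + H) * Real.sqrt H := Real.sqrt_mul h4H H
  have expand : ((Real.sqrt (4 + H) + Real.sqrt H) / 2) ^ 2 =
      (Real.sqrt (4 + H) ^ 2 + Real.sqrt H ^ 2 +
        2 * (Real.sqrt (4 + H) * Real.sqrt H)) / 4 := by ring
  rw [expand, hsq1, hsq2]
  linarith

/-- With `h² = (b₁−b₂)² + b₁²b₂²` and `λ = (√(4+h²)+√(h²))/2`, one has
`λ² − b₁² − 1 ≥ 0` and `λ² − b₂² − 1 ≥ 0`. -/
theorem stmt8 (b₁ b₂ : ℝ) :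
    0 ≤ ((Real.sqrt (4 + ((b₁ - b₂) ^ 2 + b₁ ^ 2 * b₂ ^ 2)) +
        Real.sqrt ((b₁ - b₂) ^ 2 + b₁ ^ 2 * b₂ ^ 2)) / 2) ^ 2 - b₁ ^ 2 - 1 ∧
    0 ≤ ((Real.sqrt (4 + ((b₁ - b₂) ^ 2 + b₁ ^ 2 * b₂ ^ 2)) +
        Real.sqrt ((b₁ - b₂) ^ 2 + b₁ ^ 2 * b₂ ^ 2)) / 2) ^ 2 - b₂ ^ 2 - 1 := by
  constructor
  · exact stmt8_aux _ b₁ (by positivity)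
      (by nlinarith [sq_nonneg (b₂ * (1 + b₁ ^ 2) - b₁)])
  · exact stmt8_aux _ b₂ (by positivity)
      (by nlinarith [sq_nonneg (b₁ * (1 + b₂ ^ 2) - b₂)])
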